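/- Let $\mathfrak{g}$ be a finite-dimensional complex simple Lie algebra and $L = \mathfrak{L}(\mathfrak{g})/Z(\mathfrak{L}(\mathfrak{g}))$ the quotient of the affine-Virasoro Lie algebra by its center. Every Lie algebra module endomorphism $\gamma \in \mathrm{Hom}_L(L, L)$ (i.e., linear map commuting with the adjoint action: $\gamma([x,y]) = [x, \gamma(y)]$ for all $x,y$) is a scalar multiple of the identity. -/

import Mathlib

open Finsupp

/-- Auxiliary: the finsupp `m ↦ (m : ℂ) • f m`. -/
noncomputable def zscaleAV {M : Type*} [AddCommGroup M] [Module ℂ M] (f : ℤ →₀ M) : ℤ →₀ M :=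
  f.sum fun k x => Finsupp.single k ((k : ℂ) • x)

lemma zscaleAV_apply {M : Type*} [AddCommGroup M] [Module ℂ M] (f : ℤ →₀ M) (m : ℤ) :
    zscaleAV f m = (m : ℂ) • f m := by
  classical
  rw [zscaleAV, Finsupp.sum_apply, Finsupp.sum]
  simp only [Finsupp.single_apply]
  rw [Finset.sum_ite_eq' f.support m (fun k => (k : ℂ) • f k)]
  by_cases h : m ∈ f.support
  · simp [h]
  · simp [h, Finsupp.notMem_support_iff.mp h]

lemma zscaleAV_sum {M N : Type*} [AddCommGroup M] [Module ℂ M] [AddCommGroup N] [Module ℂ N]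
    (f : ℤ →₀ M) (φ : ℤ → M →ₗ[ℂ] N) :
    ((zscaleAV f).sum fun m x => φ m x) = f.sum fun m x => φ m ((m : ℂ) • x) := by
  classical
  rw [zscaleAV]
  rw [show (f.sum fun k x => Finsupp.single k ((k : ℂ) • x))
      = ∑ a ∈ f.support, Finsupp.single a ((a : ℂ) • f a) from rfl]
  rw [← Finsupp.sum_finsetSum_index (fun i => (φ i).map_zero) (fun i x y => (φ i).map_add x y)]
  refine Finset.sum_congr rfl fun k hk => ?_
  exact Finsupp.sum_single_index ((φ k).map_zero)

lemma zscaleAV_sum_smul {N : Type*} [AddCommGroup N] [Module ℂ N]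
    (c : ℤ →₀ ℂ) (v : ℤ → N) :
    ((zscaleAV c).sum fun m t => t • v m) = c.sum fun m t => ((m : ℂ) * t) • v m := by
  have := zscaleAV_sum c (fun m => LinearMap.toSpanSingleton ℂ N (v m))
  simpa [LinearMap.toSpanSingleton_apply, smul_eq_mul] using this

lemma zscaleAV_eq_zero {M : Type*} [AddCommGroup M] [Module ℂ M] {f : ℤ →₀ M}
    (h : zscaleAV f = 0) : f = Finsupp.single 0 (f 0) := by
  ext m
  rcases eq_or_ne m 0 with rfl | hm
  · simp
  · have h1 : (m : ℂ) • f m = 0 := by rw [← zscaleAV_apply, h]; rfl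
    have h2 : (m : ℂ) ≠ 0 := Int.cast_ne_zero.mpr hm
    rw [smul_eq_zero] at h1
    simp [Finsupp.single_apply, Ne.symm hm, h1.resolve_left h2]



/-- The affine-Virasoro Lie algebra structure: `L` is the affine-Virasoro Lie algebra
associated with the Lie algebra `g`, with `E m x` playing the role of `x ⊗ tᵐ`,
`d m` the Virasoro generators, and central elements `K₁, K₂`. -/
structure AffineVirasoro (g L : Type*) [LieRing g] [LieAlgebra ℂ g]
    [LieRing L] [LieAlgebra ℂ L] where
  E : ℤ → g →ₗ[ℂ] L
  d : ℤ → L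
  K₁ : L
  K₂ : L
  bracket_EE : ∀ (m n : ℤ) (x y : g), ⁅E m x, E n y⁆ =
    E (m + n) ⁅x, y⁆ + (if m + n = 0 then ((m : ℂ) * killingForm ℂ g x y) • K₁ else 0)
  bracket_dE : ∀ (m n : ℤ) (x : g), ⁅d m, E n x⁆ = (n : ℂ) • E (m + n) x
  bracket_dd : ∀ m n : ℤ, ⁅d m, d n⁆ =
    ((n : ℂ) - (m : ℂ)) • d (m + n) +
      (if m + n = 0 then (((m : ℂ) ^ 3 - (m : ℂ)) / 12) • K₂ else 0)
  central_K₁ : ∀ v : L, ⁅v, K₁⁆ = 0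
  central_K₂ : ∀ v : L, ⁅v, K₂⁆ = 0
  spans : Submodule.span ℂ
    (({K₁, K₂} : Set L) ∪ Set.range d ∪ ⋃ m : ℤ, Set.range (E m)) = ⊤
  indep : ∀ (f : ℤ →₀ g) (c : ℤ →₀ ℂ) (a b : ℂ),
    ((f.sum fun m x => E m x) + (c.sum fun m t => t • d m) + a • K₁ + b • K₂ = 0) →
    f = 0 ∧ c = 0 ∧ a = 0 ∧ b = 0

/-- The degree-`n` graded component `L(g)ₙ` of the affine-Virasoro Lie algebra. -/
def AffineVirasoro.graded {g L : Type*} [LieRing g] [LieAlgebra ℂ g]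
    [LieRing L] [LieAlgebra ℂ L] (V : AffineVirasoro g L) (n : ℤ) : Submodule ℂ L :=
  if n = 0 then
    Submodule.span ℂ (Set.range (V.E 0) ∪ {V.d 0, V.K₁, V.K₂})
  else
    Submodule.span ℂ (Set.range (V.E n) ∪ {V.d n})

/-- The degree-`n` component `g̃ₙ` of the ideal `g̃ = ĝ ⊕ ℂK₁`. -/
def AffineVirasoro.gtilde {g L : Type*} [LieRing g] [LieAlgebra ℂ g]
    [LieRing L] [LieAlgebra ℂ L] (V : AffineVirasoro g L) (n : ℤ) : Submodule ℂ L :=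
  if n = 0 then
    Submodule.span ℂ (Set.range (V.E 0) ∪ {V.K₁})
  else
    Submodule.span ℂ (Set.range (V.E n))

/-- Every module endomorphism of the centerless affine-Virasoro Lie algebra L(g)/Z(L(g)) (w.r.t. the adjoint action) is a scalar multiple of the identity. -/
theorem affineVirasoro_quotient_module_endo_scalar (g L : Type*) [LieRing g] [LieAlgebra ℂ g] [LieAlgebra.IsSimple ℂ g] [FiniteDimensional ℂ g] [LieRing L] [LieAlgebra ℂ L] (V : AffineVirasoro g L)
    (γ : (L ⧸ LieAlgebra.center ℂ L) →ₗ[ℂ] (L ⧸ LieAlgebra.center ℂ L))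
    (hγ : ∀ x y : L ⧸ LieAlgebra.center ℂ L, γ ⁅x, y⁆ = ⁅x, γ y⁆) :
    ∃ c : ℂ, ∀ v : L ⧸ LieAlgebra.center ℂ L, γ v = c • v := by
  classical
  -- simple Lie algebra facts
  have hgnontriv : ∃ y : g, y ≠ 0 := by
    by_contra h
    push_neg at h
    exact (inferInstance : LieAlgebra.IsSimple ℂ g).non_abelian
      ⟨fun x y => by rw [h x, zero_lie]⟩
  have hgcenter : ∀ x : g, (∀ y : g, ⁅y, x⁆ = 0) → x = 0 := by
    intro x hx
    have hmem : x ∈ LieAlgebra.center ℂ g :=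
      (LieModule.mem_maxTrivSubmodule ℂ g g x).mpr hx
    rcases (inferInstance : LieAlgebra.IsSimple ℂ g).eq_bot_or_eq_top
        (LieAlgebra.center ℂ g) with h | h
    · rw [h] at hmem; exact hmem
    · exact absurd ((LieAlgebra.isLieAbelian_iff_center_eq_top ℂ g).mpr h)
        (inferInstance : LieAlgebra.IsSimple ℂ g).non_abelian
  -- representation of elements of L
  have hrepr : ∀ v : L, ∃ (f : ℤ →₀ g) (c : ℤ →₀ ℂ) (a b : ℂ),
      v = (f.sum fun m x => V.E m x) + (c.sum fun m t => t • V.d m)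
        + a • V.K₁ + b • V.K₂ := by
    set T₁ : (ℤ →₀ g) →ₗ[ℂ] L := Finsupp.lsum ℂ fun m => V.E m with hT₁
    set T₂ : (ℤ →₀ ℂ) →ₗ[ℂ] L :=
      Finsupp.lsum ℂ fun m => LinearMap.toSpanSingleton ℂ L (V.d m) with hT₂
    set T₃ : ℂ →ₗ[ℂ] L := LinearMap.toSpanSingleton ℂ L V.K₁ with hT₃
    set T₄ : ℂ →ₗ[ℂ] L := LinearMap.toSpanSingleton ℂ L V.K₂ with hT₄
    set T : ((ℤ →₀ g) × ((ℤ →₀ ℂ) × (ℂ × ℂ))) →ₗ[ℂ] L :=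
      T₁.coprod (T₂.coprod (T₃.coprod T₄)) with hT
    have hTapp : ∀ (f : ℤ →₀ g) (c : ℤ →₀ ℂ) (a b : ℂ),
        T ⟨f, c, a, b⟩ = (f.sum fun m x => V.E m x) + (c.sum fun m t => t • V.d m)
          + a • V.K₁ + b • V.K₂ := by
      intro f c a b
      simp only [hT, hT₁, hT₂, hT₃, hT₄, LinearMap.coprod_apply, Finsupp.lsum_apply,
        LinearMap.toSpanSingleton_apply]
      have hc : (c.sum fun b => ⇑(LinearMap.toSpanSingleton ℂ L (V.d b)))
          = c.sum fun m t => t • V.d m := rfl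
      rw [hc]
      abel
    have hle : Submodule.span ℂ
        (({V.K₁, V.K₂} : Set L) ∪ Set.range V.d ∪ ⋃ m : ℤ, Set.range (V.E m))
        ≤ LinearMap.range T := by
      rw [Submodule.span_le]
      rintro v (hv | hv)
      · rcases hv with hv | ⟨m, rfl⟩
        · rcases hv with rfl | rfl
          · exact ⟨⟨0, 0, 1, 0⟩, by rw [hTapp]; simp⟩
          · exact ⟨⟨0, 0, 0, 1⟩, by rw [hTapp]; simp⟩
        · refine ⟨⟨0, Finsupp.single m 1, 0, 0⟩, ?_⟩
          rw [hTapp, Finsupp.sum_single_index (by simp)]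
          simp
      · simp only [Set.mem_iUnion, Set.mem_range] at hv
        obtain ⟨m, x, rfl⟩ := hv
        refine ⟨⟨Finsupp.single m x, 0, 0, 0⟩, ?_⟩
        rw [hTapp, Finsupp.sum_single_index (by simp)]
        simp
    rw [V.spans] at hle
    intro v
    obtain ⟨⟨f, c, a, b⟩, hv⟩ := hle (Submodule.mem_top (x := v))
    exact ⟨f, c, a, b, by rw [← hv, hTapp]⟩
  -- the bracket of d 0 with a general element
  have hd0br : ∀ (f : ℤ →₀ g) (c : ℤ →₀ ℂ) (a b : ℂ),
      ⁅V.d 0, (f.sum fun m x => V.E m x) + (c.sum fun m t => t • V.d m)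
        + a • V.K₁ + b • V.K₂⁆
      = ((zscaleAV f).sum fun m x => V.E m x)
        + ((zscaleAV c).sum fun m t => t • V.d m) := by
    intro f c a b
    have h1 : ⁅V.d 0, f.sum fun m x => V.E m x⁆ = (zscaleAV f).sum fun m x => V.E m x := by
      rw [← LieAlgebra.ad_apply (R := ℂ), map_finsuppSum, zscaleAV_sum]
      refine Finsupp.sum_congr fun m _ => ?_
      rw [LieAlgebra.ad_apply, V.bracket_dE, zero_add, map_smul]
    have h2 : ⁅V.d 0, c.sum fun m t => t • V.d m⁆
        = (zscaleAV c).sum fun m t => t • V.d m := by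
      rw [← LieAlgebra.ad_apply (R := ℂ), map_finsuppSum, zscaleAV_sum_smul]
      refine Finsupp.sum_congr fun m _ => ?_
      rw [map_smul, LieAlgebra.ad_apply, V.bracket_dd]
      have hz : (((0 : ℤ) : ℂ) ^ 3 - ((0 : ℤ) : ℂ)) / 12 = 0 := by norm_num
      rw [hz]
      simp only [zero_add, Int.cast_zero, sub_zero, zero_smul, ite_self, add_zero]
      rw [smul_smul, mul_comm]
    rw [lie_add, lie_add, lie_add, lie_smul, lie_smul, V.central_K₁, V.central_K₂,
      smul_zero, smul_zero, add_zero, add_zero, h1, h2]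
  -- the center is spanned by K₁ K₂
  have hcenter : ∀ z ∈ LieAlgebra.center ℂ L, ∃ a b : ℂ, z = a • V.K₁ + b • V.K₂ := by
    intro z hz
    obtain ⟨f, c, a, b, hv⟩ := hrepr z
    have hz' : ∀ u : L, ⁅u, z⁆ = 0 := (LieModule.mem_maxTrivSubmodule ℂ L L z).mp hz
    have h0 : ((zscaleAV f).sum fun m x => V.E m x)
        + ((zscaleAV c).sum fun m t => t • V.d m) + (0:ℂ) • V.K₁ + (0:ℂ) • V.K₂ = 0 := by
      rw [zero_smul, zero_smul, add_zero, add_zero, ← hd0br f c a b, ← hv, hz']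
    obtain ⟨hf, hc, -, -⟩ := V.indep _ _ _ _ h0
    have hf' : f = Finsupp.single 0 (f 0) := zscaleAV_eq_zero hf
    have hc' : c = Finsupp.single 0 (c 0) := zscaleAV_eq_zero hc
    set x := f 0 with hx
    set r := c 0 with hr
    have hz2 : z = V.E 0 x + r • V.d 0 + a • V.K₁ + b • V.K₂ := by
      rw [hv]
      nth_rewrite 1 [hf']
      nth_rewrite 1 [hc']
      rw [Finsupp.sum_single_index (by simp), Finsupp.sum_single_index (by simp)]
    have key : ∀ y : g, ⁅y, x⁆ = r • y := by
      intro y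
      have h3 : ⁅V.E 1 y, z⁆ = 0 := hz' _
      rw [hz2, lie_add, lie_add, lie_add, lie_smul, lie_smul, lie_smul,
        V.central_K₁, V.central_K₂, smul_zero, smul_zero, add_zero, add_zero,
        V.bracket_EE, ← lie_skew (V.E 1 y) (V.d 0), V.bracket_dE] at h3
      rw [if_neg (by norm_num)] at h3
      simp only [add_zero, zero_add, one_smul, smul_neg, Int.cast_one] at h3
      have h4 : V.E 1 (⁅y, x⁆ - r • y) = 0 := by
        rw [map_sub, map_smul, sub_eq_add_neg]
        exact h3
      have h5 := V.indep (Finsupp.single 1 (⁅y, x⁆ - r • y)) 0 0 0 (by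
        rw [Finsupp.sum_single_index (by simp), Finsupp.sum_zero_index, zero_smul, zero_smul,
          add_zero, add_zero, add_zero, h4])
      have h6 := h5.1
      rw [Finsupp.single_eq_zero] at h6
      exact sub_eq_zero.mp h6
    rcases eq_or_ne r 0 with hr0 | hr0
    · have hx0 : x = 0 := hgcenter x (fun y => by rw [key y, hr0, zero_smul])
      exact ⟨a, b, by rw [hz2, hx0, hr0, map_zero, zero_smul, add_zero, zero_add]⟩
    · exfalso
      have hxx : r • x = 0 := by rw [← key x, lie_self]
      have hx0 : x = 0 := by
        rcases smul_eq_zero.mp hxx with h | h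
        · exact absurd h hr0
        · exact h
      obtain ⟨y, hy⟩ := hgnontriv
      have hry : r • y = 0 := by rw [← key y, hx0, lie_zero]
      rcases smul_eq_zero.mp hry with h | h
      · exact hr0 h
      · exact hy h
  -- quotient map
  set p : L →ₗ[ℂ] L ⧸ LieAlgebra.center ℂ L :=
    (LieSubmodule.Quotient.mk' (LieAlgebra.center ℂ L)).toLinearMap with hpdef
  have hp_surj : Function.Surjective p := fun q =>
    LieSubmodule.Quotient.surjective_mk' (LieAlgebra.center ℂ L) q
  have hpK₁ : p V.K₁ = 0 := (LieSubmodule.Quotient.mk_eq_zero _).mpr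
    ((LieModule.mem_maxTrivSubmodule ℂ L L _).mpr V.central_K₁)
  have hpK₂ : p V.K₂ = 0 := (LieSubmodule.Quotient.mk_eq_zero _).mpr
    ((LieModule.mem_maxTrivSubmodule ℂ L L _).mpr V.central_K₂)
  have hpbr : ∀ u v : L, p ⁅u, v⁆ = ⁅p u, p v⁆ := fun u v =>
    LieSubmodule.Quotient.mk_bracket _ u v
  have hQdE : ∀ (m n : ℤ) (x : g), ⁅p (V.d m), p (V.E n x)⁆ = (n:ℂ) • p (V.E (m+n) x) := by
    intro m n x
    rw [← hpbr, V.bracket_dE, map_smul]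
  have hQdd : ∀ m n : ℤ, ⁅p (V.d m), p (V.d n)⁆ = ((n:ℂ) - m) • p (V.d (m+n)) := by
    intro m n
    rw [← hpbr, V.bracket_dd, map_add, map_smul]
    split_ifs with h
    · rw [map_smul, hpK₂, smul_zero, add_zero]
    · rw [map_zero, add_zero]
  have hQEE : ∀ (m n : ℤ) (x y : g), ⁅p (V.E m x), p (V.E n y)⁆ = p (V.E (m+n) ⁅x, y⁆) := by
    intro m n x y
    rw [← hpbr, V.bracket_EE, map_add]
    split_ifs with h
    · rw [map_smul, hpK₁, smul_zero, add_zero]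
    · rw [map_zero, add_zero]
  have hQind : ∀ (f : ℤ →₀ g) (c : ℤ →₀ ℂ),
      p ((f.sum fun m x => V.E m x) + (c.sum fun m t => t • V.d m)) = 0 →
      f = 0 ∧ c = 0 := by
    intro f c h
    have hmem : (f.sum fun m x => V.E m x) + (c.sum fun m t => t • V.d m)
        ∈ LieAlgebra.center ℂ L := (LieSubmodule.Quotient.mk_eq_zero _).mp h
    obtain ⟨a, b, hab⟩ := hcenter _ hmem
    have h0 : (f.sum fun m x => V.E m x) + (c.sum fun m t => t • V.d m)
        + (-a) • V.K₁ + (-b) • V.K₂ = 0 := by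
      rw [neg_smul, neg_smul, hab]
      abel
    obtain ⟨h1, h2, -, -⟩ := V.indep _ _ _ _ h0
    exact ⟨h1, h2⟩
  have he0inj : ∀ w : g, p (V.E 0 w) = 0 → w = 0 := by
    intro w hw
    have h := hQind (Finsupp.single 0 w) 0 (by
      rw [Finsupp.sum_single_index (by simp), Finsupp.sum_zero_index, add_zero]
      exact hw)
    have h1 := h.1
    rwa [Finsupp.single_eq_zero] at h1
  -- decompose γ (p (d 0))
  obtain ⟨u, hu⟩ := hp_surj (γ (p (V.d 0)))
  obtain ⟨f, c, a, b, huv⟩ := hrepr u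
  have hγd0br : ⁅p (V.d 0), γ (p (V.d 0))⁆ = 0 := by
    rw [← hγ, lie_self, map_zero]
  have h0 : p (((zscaleAV f).sum fun m x => V.E m x)
      + ((zscaleAV c).sum fun m t => t • V.d m)) = 0 := by
    rw [← hd0br f c a b, ← huv, hpbr, hu, hγd0br]
  obtain ⟨hf, hc⟩ := hQind _ _ h0
  have hf' : f = Finsupp.single 0 (f 0) := zscaleAV_eq_zero hf
  have hc' : c = Finsupp.single 0 (c 0) := zscaleAV_eq_zero hc
  set r := c 0 with hrdef
  have hγd0 : γ (p (V.d 0)) = p (V.E 0 (f 0)) + r • p (V.d 0) := by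
    rw [← hu, huv]
    nth_rewrite 1 [hf']
    nth_rewrite 1 [hc']
    rw [Finsupp.sum_single_index (by simp), Finsupp.sum_single_index (by simp),
      map_add, map_add, map_add, map_smul, map_smul, map_smul, hpK₁, hpK₂,
      smul_zero, smul_zero, add_zero, add_zero]
  have h2e0 : ∀ y : g, ⁅p (V.E 0 y), p (V.d 0)⁆ = 0 := by
    intro y
    rw [← lie_skew (p (V.E 0 y)) (p (V.d 0)), hQdE 0 0 y]
    norm_num
  have hx0 : f 0 = 0 := by
    apply hgcenter
    intro y
    apply he0inj
    have h1 := hγ (p (V.E 0 y)) (p (V.d 0))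
    rw [h2e0 y, map_zero, hγd0, lie_add, lie_smul, h2e0 y, smul_zero, add_zero,
      hQEE 0 0] at h1
    rw [zero_add] at h1
    exact h1.symm
  have hγD0 : γ (p (V.d 0)) = r • p (V.d 0) := by
    rw [hγd0, hx0, map_zero, map_zero, zero_add]
  -- γ on the d n
  have hDn : ∀ n : ℤ, γ (p (V.d n)) = r • p (V.d n) := by
    intro n
    rcases eq_or_ne n 0 with rfl | hn
    · exact hγD0
    · have h2 : ⁅p (V.d n), p (V.d 0)⁆ = (-(n:ℂ)) • p (V.d n) := by
        have h3 := hQdd n 0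
        rw [add_zero] at h3
        simpa using h3
      have h1 := hγ (p (V.d n)) (p (V.d 0))
      rw [h2, map_smul, hγD0, lie_smul, h2, smul_comm r] at h1
      have hne : (-(n:ℂ)) ≠ 0 := neg_ne_zero.mpr (Int.cast_ne_zero.mpr hn)
      exact smul_right_injective _ hne h1
  -- γ on E m for m ≠ 0
  have hEm' : ∀ m : ℤ, m ≠ 0 → ∀ y : g, γ (p (V.E m y)) = r • p (V.E m y) := by
    intro m hm y
    have h2 : ⁅p (V.E m y), p (V.d 0)⁆ = (-(m:ℂ)) • p (V.E m y) := by
      rw [← lie_skew (p (V.E m y)) (p (V.d 0)), hQdE 0 m y, zero_add, neg_smul]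
    have h1 := hγ (p (V.E m y)) (p (V.d 0))
    rw [h2, map_smul, hγD0, lie_smul, h2, smul_comm r] at h1
    have hne : (-(m:ℂ)) ≠ 0 := neg_ne_zero.mpr (Int.cast_ne_zero.mpr hm)
    exact smul_right_injective _ hne h1
  have hEm : ∀ (m : ℤ) (y : g), γ (p (V.E m y)) = r • p (V.E m y) := by
    intro m y
    rcases eq_or_ne m 0 with rfl | hm
    · have h2 : ⁅p (V.d 1), p (V.E (-1) y)⁆ = -p (V.E 0 y) := by
        have h3 := hQdE 1 (-1) y
        norm_num at h3
        exact h3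
      have h1 := hγ (p (V.d 1)) (p (V.E (-1) y))
      rw [h2, map_neg, hEm' (-1) (by norm_num) y, lie_smul, h2, smul_neg] at h1
      exact neg_injective h1
    · exact hEm' m hm y
  -- conclusion
  refine ⟨r, fun v => ?_⟩
  obtain ⟨u', rfl⟩ := hp_surj v
  obtain ⟨f', c', a', b', rfl⟩ := hrepr u'
  have hpu : p (((f'.sum fun m x => V.E m x) + c'.sum fun m t => t • V.d m)
      + a' • V.K₁ + b' • V.K₂)
      = (f'.sum fun m x => p (V.E m x)) + c'.sum fun m t => t • p (V.d m) := by
    rw [map_add, map_add, map_add, map_smul, map_smul, hpK₁, hpK₂,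
      smul_zero, smul_zero, add_zero, add_zero]
    congr 1
    · exact map_finsuppSum p _ _
    · rw [map_finsuppSum p]
      exact Finsupp.sum_congr fun m _ => map_smul p _ _
  rw [hpu, map_add, smul_add]
  have hA : γ (f'.sum fun m x => p (V.E m x)) = r • f'.sum fun m x => p (V.E m x) := by
    rw [map_finsuppSum, Finsupp.smul_sum]
    exact Finsupp.sum_congr fun m _ => hEm m (f' m)
  have hB : γ (c'.sum fun m t => t • p (V.d m)) = r • c'.sum fun m t => t • p (V.d m) := by
    rw [map_finsuppSum, Finsupp.smul_sum]
    refine Finsupp.sum_congr fun m _ => ?_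
    rw [map_smul, hDn m, smul_comm]
  rw [hA, hB]
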